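/- Let $x_1, x_2$ be i.i.d. with law $S\,\delta_0 + (1-S)\,\mathrm{Unif}(0,1]$ for $S \in [0,1)$. Then for $x \in [-1,0)$, $\mathrm{P}(x_1 - x_2 \le x \mid x_1 \le x_2) = \frac{((1-S)x+1)^2 - S^2}{1+S^2}$, and for $x \in (0,1]$, $\mathrm{P}(x_1 - x_2 \le x \mid x_1 > x_2) = \frac{1 - (1-(1-S)x)^2}{1-S^2}$. -/

import Mathlib

open MeasureTheory ProbabilityTheory

/-- The sparse-uniform mixture law `S·δ₀ + (1-S)·Unif(0,1]`. -/
noncomputable def mixLaw (S : ℝ) : Measure ℝ :=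
  (ENNReal.ofReal S) • Measure.dirac 0 +
    (ENNReal.ofReal (1 - S)) • (volume.restrict (Set.Ioc (0:ℝ) 1))



lemma lint_aff (c d a b : ℝ) (hab : a ≤ b) (hf : ∀ u ∈ Set.Ioc a b, 0 ≤ c + d * u) :
    ∫⁻ u in Set.Ioc a b, ENNReal.ofReal (c + d * u) =
      ENNReal.ofReal (c * (b - a) + d * (b ^ 2 - a ^ 2) / 2) := by
  rw [← ofReal_integral_eq_lintegral_ofReal
      ((by continuity : Continuous fun u : ℝ => c + d * u).integrableOn_Ioc)
      ((ae_restrict_iff' measurableSet_Ioc).2 (ae_of_all _ hf))]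
  congr 1
  rw [← intervalIntegral.integral_of_le hab,
    intervalIntegral.integral_add intervalIntegrable_const
      ((intervalIntegral.intervalIntegrable_id).const_mul d),
    intervalIntegral.integral_const, intervalIntegral.integral_const_mul, integral_id,
    smul_eq_mul]
  ring


lemma mix_apply (S : ℝ) {t : Set ℝ} (ht : MeasurableSet t) :
    mixLaw S t = ENNReal.ofReal S * t.indicator 1 0 +
      ENNReal.ofReal (1 - S) * volume (t ∩ Set.Ioc 0 1) := by
  rw [mixLaw, Measure.add_apply, Measure.smul_apply, Measure.smul_apply,
    Measure.dirac_apply' _ ht, Measure.restrict_apply ht, smul_eq_mul, smul_eq_mul]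

instance (S : ℝ) : SFinite (mixLaw S) := by
  rw [mixLaw]; infer_instance

lemma mix_prod_apply (S : ℝ) {s : Set (ℝ × ℝ)} (hs : MeasurableSet s) :
    ((mixLaw S).prod (mixLaw S)) s =
      ENNReal.ofReal S * mixLaw S (Prod.mk (0:ℝ) ⁻¹' s) +
      ENNReal.ofReal (1 - S) * ∫⁻ u in Set.Ioc (0:ℝ) 1, mixLaw S (Prod.mk u ⁻¹' s) := by
  rw [Measure.prod_apply hs]
  rw [show (mixLaw S : Measure ℝ) = (ENNReal.ofReal S) • Measure.dirac 0 +
    (ENNReal.ofReal (1 - S)) • (volume.restrict (Set.Ioc (0:ℝ) 1)) from rfl,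
    lintegral_add_measure, lintegral_smul_measure, lintegral_smul_measure,
    lintegral_dirac' _ (measurable_measure_prodMk_left hs), smul_eq_mul, smul_eq_mul]

lemma lint_split (f : ℝ → ENNReal) (m : ℝ) (h0 : 0 ≤ m) (h1 : m ≤ 1) :
    ∫⁻ u in Set.Ioc (0:ℝ) 1, f u =
      (∫⁻ u in Set.Ioc 0 m, f u) + ∫⁻ u in Set.Ioc m 1, f u := by
  rw [← Set.Ioc_union_Ioc_eq_Ioc h0 h1,
    lintegral_union measurableSet_Ioc (Set.Ioc_disjoint_Ioc_of_le le_rfl)]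

lemma P1 (S : ℝ) (hS : S ∈ Set.Ico (0:ℝ) 1) :
    ((mixLaw S).prod (mixLaw S)) {p : ℝ × ℝ | p.1 ≤ p.2} =
      ENNReal.ofReal ((1 + S ^ 2) / 2) := by
  obtain ⟨hS0, hS1⟩ := hS
  have hs : MeasurableSet {p : ℝ × ℝ | p.1 ≤ p.2} :=
    measurableSet_le measurable_fst measurable_snd
  rw [mix_prod_apply S hs]
  have e0 : Prod.mk (0:ℝ) ⁻¹' {p : ℝ × ℝ | p.1 ≤ p.2} = Set.Ici 0 := by
    ext v; simp [Set.mem_Ici]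
  have h0 : mixLaw S (Prod.mk (0:ℝ) ⁻¹' {p : ℝ × ℝ | p.1 ≤ p.2}) =
      ENNReal.ofReal (S + (1 - S)) := by
    rw [e0, mix_apply S measurableSet_Ici, Set.indicator_of_mem (by simp) 1,
      show Set.Ici (0:ℝ) ∩ Set.Ioc 0 1 = Set.Ioc 0 1 from
        Set.inter_eq_right.mpr (fun v hv => le_of_lt hv.1), Real.volume_Ioc,
      ENNReal.ofReal_add hS0 (by linarith)]
    simp [← ENNReal.ofReal_mul (by linarith : (0:ℝ) ≤ 1 - S)]
  have hint : ∫⁻ u in Set.Ioc (0:ℝ) 1, mixLaw S (Prod.mk u ⁻¹' {p : ℝ × ℝ | p.1 ≤ p.2}) =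
      ENNReal.ofReal ((1 - S) * (1 - 0) + (-(1 - S)) * (1 ^ 2 - 0 ^ 2) / 2) := by
    rw [setLIntegral_congr_fun_ae measurableSet_Ioc (ae_of_all _
      (fun u hu => show mixLaw S _ = ENNReal.ofReal ((1 - S) + (-(1 - S)) * u) from ?_))]
    · exact lint_aff _ _ _ _ (by norm_num) (fun u hu => by nlinarith [hu.1, hu.2])
    · have e : Prod.mk u ⁻¹' {p : ℝ × ℝ | p.1 ≤ p.2} = Set.Ici u := by
        ext v; simp [Set.mem_Ici]
      have e2 : Set.Ici u ∩ Set.Ioc 0 1 = Set.Icc u 1 := by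
        ext v
        simp only [Set.mem_inter_iff, Set.mem_Ici, Set.mem_Ioc, Set.mem_Icc]
        constructor
        · rintro ⟨h1, h2, h3⟩; exact ⟨h1, h3⟩
        · rintro ⟨h1, h2⟩; exact ⟨h1, lt_of_lt_of_le hu.1 h1, h2⟩
      rw [e, mix_apply S measurableSet_Ici, Set.indicator_of_notMem (by simpa using hu.1) 1,
        e2, Real.volume_Icc, mul_zero, zero_add,
        ← ENNReal.ofReal_mul (by linarith : (0:ℝ) ≤ 1 - S)]
      congr 1; ring
  rw [h0, hint, ← ENNReal.ofReal_mul hS0,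
    ← ENNReal.ofReal_mul (by linarith : (0:ℝ) ≤ 1 - S),
    ← ENNReal.ofReal_add (by nlinarith) (by nlinarith)]
  congr 1; ring

lemma P3 (S : ℝ) (hS : S ∈ Set.Ico (0:ℝ) 1) :
    ((mixLaw S).prod (mixLaw S)) {p : ℝ × ℝ | p.2 < p.1} =
      ENNReal.ofReal ((1 - S ^ 2) / 2) := by
  obtain ⟨hS0, hS1⟩ := hS
  have hs : MeasurableSet {p : ℝ × ℝ | p.2 < p.1} :=
    measurableSet_lt measurable_snd measurable_fst
  rw [mix_prod_apply S hs]
  have h0 : mixLaw S (Prod.mk (0:ℝ) ⁻¹' {p : ℝ × ℝ | p.2 < p.1}) = 0 := by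
    have e0 : Prod.mk (0:ℝ) ⁻¹' {p : ℝ × ℝ | p.2 < p.1} = Set.Iio 0 := by
      ext v; simp [Set.mem_Iio]
    rw [e0, mix_apply S measurableSet_Iio, Set.indicator_of_notMem (by simp) 1,
      show Set.Iio (0:ℝ) ∩ Set.Ioc 0 1 = ∅ by
        rw [Set.eq_empty_iff_forall_notMem]; rintro v ⟨h1, h2, h3⟩; exact absurd h1 (by simp; linarith)]
    simp
  have hint : ∫⁻ u in Set.Ioc (0:ℝ) 1, mixLaw S (Prod.mk u ⁻¹' {p : ℝ × ℝ | p.2 < p.1}) =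
      ENNReal.ofReal (S * (1 - 0) + (1 - S) * (1 ^ 2 - 0 ^ 2) / 2) := by
    rw [setLIntegral_congr_fun_ae measurableSet_Ioc (ae_of_all _
      (fun u hu => show mixLaw S _ = ENNReal.ofReal (S + (1 - S) * u) from ?_))]
    · exact lint_aff _ _ _ _ (by norm_num) (fun u hu => by nlinarith [hu.1, hu.2])
    · have e : Prod.mk u ⁻¹' {p : ℝ × ℝ | p.2 < p.1} = Set.Iio u := by
        ext v; simp [Set.mem_Iio]
      have e2 : Set.Iio u ∩ Set.Ioc 0 1 = Set.Ioo 0 u := by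
        ext v
        simp only [Set.mem_inter_iff, Set.mem_Iio, Set.mem_Ioc, Set.mem_Ioo]
        constructor
        · rintro ⟨h1, h2, h3⟩; exact ⟨h2, h1⟩
        · rintro ⟨h1, h2⟩; exact ⟨h2, h1, le_trans (le_of_lt h2) hu.2⟩
      rw [e, mix_apply S measurableSet_Iio, Set.indicator_of_mem (by simpa using hu.1) 1,
        e2, Real.volume_Ioo, ENNReal.ofReal_add hS0 (by nlinarith [hu.1]),
        ← ENNReal.ofReal_mul (by linarith : (0:ℝ) ≤ 1 - S)]
      simp [sub_zero]
  rw [h0, hint, mul_zero, zero_add,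
    ← ENNReal.ofReal_mul (by linarith : (0:ℝ) ≤ 1 - S)]
  congr 1; ring

lemma P2 (S x : ℝ) (hS : S ∈ Set.Ico (0:ℝ) 1) (hx : x ∈ Set.Ico (-1:ℝ) 0) :
    ((mixLaw S).prod (mixLaw S)) {p : ℝ × ℝ | p.1 - p.2 ≤ x} =
      ENNReal.ofReal ((((1 - S) * x + 1) ^ 2 - S ^ 2) / 2) := by
  obtain ⟨hS0, hS1⟩ := hS
  obtain ⟨hx1, hx0⟩ := hx
  have hs : MeasurableSet {p : ℝ × ℝ | p.1 - p.2 ≤ x} :=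
    measurableSet_le (measurable_fst.sub measurable_snd) measurable_const
  rw [mix_prod_apply S hs]
  have h0 : mixLaw S (Prod.mk (0:ℝ) ⁻¹' {p : ℝ × ℝ | p.1 - p.2 ≤ x}) =
      ENNReal.ofReal ((1 - S) * (1 - -x)) := by
    have e0 : Prod.mk (0:ℝ) ⁻¹' {p : ℝ × ℝ | p.1 - p.2 ≤ x} = Set.Ici (-x) := by
      ext v; simp only [Set.mem_preimage, Set.mem_setOf_eq, Set.mem_Ici]; constructor <;>
        (intro h; linarith)
    have e2 : Set.Ici (-x) ∩ Set.Ioc 0 1 = Set.Icc (-x) 1 := by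
      ext v
      simp only [Set.mem_inter_iff, Set.mem_Ici, Set.mem_Ioc, Set.mem_Icc]
      constructor
      · rintro ⟨h1, h2, h3⟩; exact ⟨h1, h3⟩
      · rintro ⟨h1, h2⟩; exact ⟨h1, by linarith, h2⟩
    rw [e0, mix_apply S measurableSet_Ici,
      Set.indicator_of_notMem (by simp [Set.mem_Ici]; linarith) 1, e2, Real.volume_Icc,
      mul_zero, zero_add, ← ENNReal.ofReal_mul (by linarith : (0:ℝ) ≤ 1 - S)]
  have hint : ∫⁻ u in Set.Ioc (0:ℝ) 1, mixLaw S (Prod.mk u ⁻¹' {p : ℝ × ℝ | p.1 - p.2 ≤ x}) =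
      ENNReal.ofReal ((1 - S) * (1 + x) * (1 + x - 0) + (-(1 - S)) * ((1 + x) ^ 2 - 0 ^ 2) / 2) := by
    rw [lint_split _ (1 + x) (by linarith) (by linarith)]
    have first : ∫⁻ u in Set.Ioc (0:ℝ) (1 + x),
        mixLaw S (Prod.mk u ⁻¹' {p : ℝ × ℝ | p.1 - p.2 ≤ x}) =
        ENNReal.ofReal ((1 - S) * (1 + x) * (1 + x - 0) + (-(1 - S)) * ((1 + x) ^ 2 - 0 ^ 2) / 2) := by
      rw [setLIntegral_congr_fun_ae measurableSet_Ioc (ae_of_all _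
        (fun u hu => show mixLaw S _ = ENNReal.ofReal ((1 - S) * (1 + x) + (-(1 - S)) * u) from ?_))]
      · exact lint_aff _ _ _ _ (by linarith) (fun u hu => by nlinarith [hu.1, hu.2])
      · have e : Prod.mk u ⁻¹' {p : ℝ × ℝ | p.1 - p.2 ≤ x} = Set.Ici (u - x) := by
          ext v; simp only [Set.mem_preimage, Set.mem_setOf_eq, Set.mem_Ici]; constructor <;>
            (intro h; linarith)
        have e2 : Set.Ici (u - x) ∩ Set.Ioc 0 1 = Set.Icc (u - x) 1 := by
          ext v
          simp only [Set.mem_inter_iff, Set.mem_Ici, Set.mem_Ioc, Set.mem_Icc]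
          constructor
          · rintro ⟨h1, h2, h3⟩; exact ⟨h1, h3⟩
          · rintro ⟨h1, h2⟩; exact ⟨h1, by linarith [hu.1], h2⟩
        rw [e, mix_apply S measurableSet_Ici,
          Set.indicator_of_notMem (by simp [Set.mem_Ici]; linarith [hu.1]) 1, e2,
          Real.volume_Icc, mul_zero, zero_add,
          ← ENNReal.ofReal_mul (by linarith : (0:ℝ) ≤ 1 - S)]
        congr 1; ring
    have second : ∫⁻ u in Set.Ioc (1 + x) 1,
        mixLaw S (Prod.mk u ⁻¹' {p : ℝ × ℝ | p.1 - p.2 ≤ x}) = 0 := by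
      rw [setLIntegral_congr_fun_ae measurableSet_Ioc (ae_of_all _
        (fun u hu => show mixLaw S _ = 0 from ?_))]
      · exact lintegral_zero
      · have e : Prod.mk u ⁻¹' {p : ℝ × ℝ | p.1 - p.2 ≤ x} = Set.Ici (u - x) := by
          ext v; simp only [Set.mem_preimage, Set.mem_setOf_eq, Set.mem_Ici]; constructor <;>
            (intro h; linarith)
        have e2 : Set.Ici (u - x) ∩ Set.Ioc 0 1 = ∅ := by
          rw [Set.eq_empty_iff_forall_notMem]; rintro v ⟨h1, h2, h3⟩
          simp only [Set.mem_Ici] at h1; linarith [hu.1]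
        rw [e, mix_apply S measurableSet_Ici,
          Set.indicator_of_notMem (by simp [Set.mem_Ici]; linarith [hu.1]) 1, e2]
        simp
    rw [first, second, add_zero]
  rw [h0, hint, ← ENNReal.ofReal_mul hS0,
    ← ENNReal.ofReal_mul (by linarith : (0:ℝ) ≤ 1 - S),
    ← ENNReal.ofReal_add
      (mul_nonneg hS0 (mul_nonneg (by linarith) (by linarith)))
      (mul_nonneg (by linarith)
        (by nlinarith [mul_nonneg (show (0:ℝ) ≤ 1 - S by linarith) (sq_nonneg (1 + x))]))]
  congr 1; ring

lemma P4 (S x : ℝ) (hS : S ∈ Set.Ico (0:ℝ) 1) (hx : x ∈ Set.Ioc (0:ℝ) 1) :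
    ((mixLaw S).prod (mixLaw S)) ({p : ℝ × ℝ | p.2 < p.1} ∩ {p : ℝ × ℝ | p.1 - p.2 ≤ x}) =
      ENNReal.ofReal ((1 - (1 - (1 - S) * x) ^ 2) / 2) := by
  obtain ⟨hS0, hS1⟩ := hS
  obtain ⟨hx0, hx1⟩ := hx
  have hs : MeasurableSet ({p : ℝ × ℝ | p.2 < p.1} ∩ {p : ℝ × ℝ | p.1 - p.2 ≤ x}) :=
    (measurableSet_lt measurable_snd measurable_fst).inter
      (measurableSet_le (measurable_fst.sub measurable_snd) measurable_const)
  rw [mix_prod_apply S hs]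
  have h0 : mixLaw S (Prod.mk (0:ℝ) ⁻¹' ({p : ℝ × ℝ | p.2 < p.1} ∩ {p : ℝ × ℝ | p.1 - p.2 ≤ x})) = 0 := by
    have e0 : Prod.mk (0:ℝ) ⁻¹' ({p : ℝ × ℝ | p.2 < p.1} ∩ {p : ℝ × ℝ | p.1 - p.2 ≤ x}) =
        Set.Ico (-x) 0 := by
      ext v; simp only [Set.mem_preimage, Set.mem_inter_iff, Set.mem_setOf_eq, Set.mem_Ico]
      constructor
      · rintro ⟨h1, h2⟩; exact ⟨by linarith, h1⟩
      · rintro ⟨h1, h2⟩; exact ⟨h2, by linarith⟩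
    have e2 : Set.Ico (-x) 0 ∩ Set.Ioc 0 1 = ∅ := by
      rw [Set.eq_empty_iff_forall_notMem]; rintro v ⟨⟨h1, h2⟩, h3, h4⟩; linarith
    rw [e0, mix_apply S measurableSet_Ico,
      Set.indicator_of_notMem (by simp) 1, e2]
    simp
  have hint : ∫⁻ u in Set.Ioc (0:ℝ) 1,
      mixLaw S (Prod.mk u ⁻¹' ({p : ℝ × ℝ | p.2 < p.1} ∩ {p : ℝ × ℝ | p.1 - p.2 ≤ x})) =
      ENNReal.ofReal (S * (x - 0) + (1 - S) * (x ^ 2 - 0 ^ 2) / 2) +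
        ENNReal.ofReal ((1 - S) * x * (1 - x) + 0 * (1 ^ 2 - x ^ 2) / 2) := by
    rw [lint_split _ x (by linarith) hx1]
    have eIco : ∀ u : ℝ, Prod.mk u ⁻¹' ({p : ℝ × ℝ | p.2 < p.1} ∩ {p : ℝ × ℝ | p.1 - p.2 ≤ x}) =
        Set.Ico (u - x) u := by
      intro u
      ext v; simp only [Set.mem_preimage, Set.mem_inter_iff, Set.mem_setOf_eq, Set.mem_Ico]
      constructor
      · rintro ⟨h1, h2⟩; exact ⟨by linarith, h1⟩
      · rintro ⟨h1, h2⟩; exact ⟨h2, by linarith⟩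
    have first : ∫⁻ u in Set.Ioc (0:ℝ) x,
        mixLaw S (Prod.mk u ⁻¹' ({p : ℝ × ℝ | p.2 < p.1} ∩ {p : ℝ × ℝ | p.1 - p.2 ≤ x})) =
        ENNReal.ofReal (S * (x - 0) + (1 - S) * (x ^ 2 - 0 ^ 2) / 2) := by
      rw [setLIntegral_congr_fun_ae measurableSet_Ioc (ae_of_all _
        (fun u hu => show mixLaw S _ = ENNReal.ofReal (S + (1 - S) * u) from ?_))]
      · exact lint_aff _ _ _ _ (by linarith) (fun u hu => by nlinarith [hu.1, hu.2])
      · have e2 : Set.Ico (u - x) u ∩ Set.Ioc 0 1 = Set.Ioo 0 u := by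
          ext v
          simp only [Set.mem_inter_iff, Set.mem_Ico, Set.mem_Ioc, Set.mem_Ioo]
          constructor
          · rintro ⟨⟨h1, h2⟩, h3, h4⟩; exact ⟨h3, h2⟩
          · rintro ⟨h1, h2⟩; exact ⟨⟨by linarith [hu.2], h2⟩, h1, by linarith [hu.2]⟩
        rw [eIco u, mix_apply S measurableSet_Ico,
          Set.indicator_of_mem (by simp only [Set.mem_Ico]; exact ⟨by linarith [hu.2], hu.1⟩) 1, e2,
          Real.volume_Ioo, ENNReal.ofReal_add hS0 (by nlinarith [hu.1]),
          ← ENNReal.ofReal_mul (by linarith : (0:ℝ) ≤ 1 - S)]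
        simp [sub_zero]
    have second : ∫⁻ u in Set.Ioc x 1,
        mixLaw S (Prod.mk u ⁻¹' ({p : ℝ × ℝ | p.2 < p.1} ∩ {p : ℝ × ℝ | p.1 - p.2 ≤ x})) =
        ENNReal.ofReal ((1 - S) * x * (1 - x) + 0 * (1 ^ 2 - x ^ 2) / 2) := by
      rw [setLIntegral_congr_fun_ae measurableSet_Ioc (ae_of_all _
        (fun u hu => show mixLaw S _ = ENNReal.ofReal ((1 - S) * x + 0 * u) from ?_))]
      · exact lint_aff _ _ _ _ (by linarith) (fun u hu => by nlinarith)
      · have e2 : Set.Ico (u - x) u ∩ Set.Ioc 0 1 = Set.Ico (u - x) u := by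
          apply Set.inter_eq_left.mpr
          rintro v ⟨h1, h2⟩
          exact ⟨by linarith [hu.1], by linarith [hu.2]⟩
        rw [eIco u, mix_apply S measurableSet_Ico,
          Set.indicator_of_notMem (by simp only [Set.mem_Ico]; intro h; linarith [hu.1]) 1, e2,
          Real.volume_Ico, mul_zero, zero_add,
          ← ENNReal.ofReal_mul (by linarith : (0:ℝ) ≤ 1 - S)]
        congr 1; ring
    rw [first, second]
  have hnn1 : (0:ℝ) ≤ S * (x - 0) + (1 - S) * (x ^ 2 - 0 ^ 2) / 2 := by nlinarith
  have hnn2 : (0:ℝ) ≤ (1 - S) * x * (1 - x) + 0 * (1 ^ 2 - x ^ 2) / 2 := by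
    nlinarith [mul_nonneg (mul_nonneg (show (0:ℝ) ≤ 1 - S by linarith) hx0.le)
      (show (0:ℝ) ≤ 1 - x by linarith)]
  rw [h0, hint, mul_zero, zero_add, ← ENNReal.ofReal_add hnn1 hnn2,
    ← ENNReal.ofReal_mul (show (0:ℝ) ≤ 1 - S by linarith)]
  congr 1; ring

theorem stmt7 {Ω : Type*} [MeasureSpace Ω] [IsProbabilityMeasure (ℙ : Measure Ω)]
    (S : ℝ) (hS : S ∈ Set.Ico (0:ℝ) 1)
    (X1 X2 : Ω → ℝ) (hX1 : Measurable X1) (hX2 : Measurable X2)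
    (hindep : IndepFun X1 X2)
    (hL1 : Measure.map X1 ℙ = mixLaw S) (hL2 : Measure.map X2 ℙ = mixLaw S) :
    (∀ x ∈ Set.Ico (-1 : ℝ) 0,
      ℙ[{ω | X1 ω - X2 ω ≤ x} | {ω | X1 ω ≤ X2 ω}] =
        ENNReal.ofReal ((((1 - S)*x + 1)^2 - S^2) / (1 + S^2))) ∧
    (∀ x ∈ Set.Ioc (0:ℝ) 1,
      ℙ[{ω | X1 ω - X2 ω ≤ x} | {ω | X2 ω < X1 ω}] =
        ENNReal.ofReal ((1 - (1 - (1 - S)*x)^2) / (1 - S^2))) := by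
  obtain ⟨hS0, hS1⟩ := hS
  have hpair : Measurable fun ω => (X1 ω, X2 ω) := hX1.prodMk hX2
  have hmap : Measure.map (fun ω => (X1 ω, X2 ω)) ℙ = (mixLaw S).prod (mixLaw S) := by
    rw [(indepFun_iff_map_prod_eq_prod_map_map hX1.aemeasurable hX2.aemeasurable).mp hindep,
      hL1, hL2]
  have hP : ∀ s : Set (ℝ × ℝ), MeasurableSet s →
      ℙ ((fun ω => (X1 ω, X2 ω)) ⁻¹' s) = ((mixLaw S).prod (mixLaw S)) s := fun s hs => by
    rw [← hmap, Measure.map_apply hpair hs]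
  constructor
  · intro x hx
    obtain ⟨hx1, hx0⟩ := hx
    rw [cond_apply (measurableSet_le hX1 hX2)]
    have hden : ℙ {ω | X1 ω ≤ X2 ω} = ENNReal.ofReal ((1 + S ^ 2) / 2) := by
      rw [show {ω | X1 ω ≤ X2 ω} = (fun ω => (X1 ω, X2 ω)) ⁻¹' {p : ℝ × ℝ | p.1 ≤ p.2} from rfl,
        hP _ (measurableSet_le measurable_fst measurable_snd), P1 S ⟨hS0, hS1⟩]
    have hnum : {ω | X1 ω ≤ X2 ω} ∩ {ω | X1 ω - X2 ω ≤ x} =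
        (fun ω => (X1 ω, X2 ω)) ⁻¹' {p : ℝ × ℝ | p.1 - p.2 ≤ x} := by
      ext ω
      simp only [Set.mem_inter_iff, Set.mem_setOf_eq, Set.mem_preimage]
      constructor
      · rintro ⟨h1, h2⟩; exact h2
      · intro h; exact ⟨by linarith, h⟩
    rw [hden, hnum,
      hP {p : ℝ × ℝ | p.1 - p.2 ≤ x} (measurableSet_le (measurable_fst.sub measurable_snd) measurable_const),
      P2 S x ⟨hS0, hS1⟩ ⟨hx1, hx0⟩, ← ENNReal.div_eq_inv_mul,
      ← ENNReal.ofReal_div_of_pos (by positivity)]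
    have h2 : (1:ℝ) + S ^ 2 ≠ 0 := by positivity
    congr 1
    rw [pow_two, pow_two] at *
    field_simp
  · intro x hx
    obtain ⟨hx0, hx1⟩ := hx
    rw [cond_apply (measurableSet_lt hX2 hX1)]
    have hden : ℙ {ω | X2 ω < X1 ω} = ENNReal.ofReal ((1 - S ^ 2) / 2) := by
      rw [show {ω | X2 ω < X1 ω} = (fun ω => (X1 ω, X2 ω)) ⁻¹' {p : ℝ × ℝ | p.2 < p.1} from rfl,
        hP _ (measurableSet_lt measurable_snd measurable_fst), P3 S ⟨hS0, hS1⟩]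
    have hnum : {ω | X2 ω < X1 ω} ∩ {ω | X1 ω - X2 ω ≤ x} =
        (fun ω => (X1 ω, X2 ω)) ⁻¹' ({p : ℝ × ℝ | p.2 < p.1} ∩ {p : ℝ × ℝ | p.1 - p.2 ≤ x}) := rfl
    have hsden : (0:ℝ) < (1 - S ^ 2) / 2 := by nlinarith
    rw [hden, hnum,
      hP ({p : ℝ × ℝ | p.2 < p.1} ∩ {p : ℝ × ℝ | p.1 - p.2 ≤ x}) ((measurableSet_lt measurable_snd measurable_fst).inter
        (measurableSet_le (measurable_fst.sub measurable_snd) measurable_const)),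
      P4 S x ⟨hS0, hS1⟩ ⟨hx0, hx1⟩, ← ENNReal.div_eq_inv_mul,
      ← ENNReal.ofReal_div_of_pos hsden]
    have h2 : (1:ℝ) - S ^ 2 ≠ 0 := by nlinarith
    congr 1
    field_simp
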